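/- arXiv:2206.09462 — 3 statements merged into one kernel-verified Lean document; each statement's English description precedes it below -/
import Mathlib

section
/- Let H be a real Hilbert space, a ≥ 1, and (q_k)_{k≥0} a bounded sequence in H such that q_{k+1} + (k/a)(q_{k+1} - q_k) → l as k → +∞ for some l ∈ H. Then q_k → l as k → +∞. -/
theorem stmt_7 {H : Type*} [NormedAddCommGroup H] [InnerProductSpace ℝ H]
    (a : ℝ) (ha : 1 ≤ a) (q : ℕ → H) (l : H)
    (hbdd : ∃ C : ℝ, ∀ k, ‖q k‖ ≤ C)
    (hlim : Filter.Tendsto (fun k : ℕ => q (k + 1) + ((k : ℝ) / a) • (q (k + 1) - q k))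
      Filter.atTop (nhds l)) :
    Filter.Tendsto q Filter.atTop (nhds l) := by
  have ha0 : (0:ℝ) < a := lt_of_lt_of_le one_pos ha
  set e : ℕ → H := fun k : ℕ => q (k + 1) + ((k : ℝ) / a) • (q (k + 1) - q k) with he
  have hrec : ∀ k : ℕ, q (k+1) - l =
      (((k:ℝ))/(a+k)) • (q k - l) + (a/(a+k)) • (e k - l) := by
    intro k
    have h1 : a ≠ 0 := ha0.ne'
    have h2 : a + (k:ℝ) ≠ 0 := by positivity
    simp only [he]
    match_scalars <;> (field_simp; try ring)
  have hineq : ∀ k : ℕ, ‖q (k+1) - l‖ ≤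
      ((k:ℝ)/(a+k)) * ‖q k - l‖ + (a/(a+k)) * ‖e k - l‖ := by
    intro k
    rw [hrec k]
    refine (norm_add_le _ _).trans ?_
    rw [norm_smul, norm_smul, Real.norm_eq_abs, Real.norm_eq_abs]
    have hk : (0:ℝ) ≤ (k:ℝ)/(a+k) := by positivity
    have hk2 : (0:ℝ) ≤ a/(a+k) := by positivity
    rw [abs_of_nonneg hk, abs_of_nonneg hk2]
  -- main estimate
  have key : ∀ δ : ℝ, 0 < δ → ∀ m : ℕ, 1 ≤ m → (∀ k, m ≤ k → ‖e k - l‖ ≤ δ) →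
      ∀ n, m ≤ n → ‖q n - l‖ ≤ ((m:ℝ)/n) * ‖q m - l‖ + δ := by
    intro δ hδ m hm hε n hn
    induction n, hn using Nat.le_induction with
    | base =>
      have hm0 : (0:ℝ) < (m:ℝ) := by exact_mod_cast hm
      rw [div_self hm0.ne', one_mul]
      linarith
    | succ n hn ih =>
      have hn1 : (1:ℝ) ≤ (n:ℝ) := by exact_mod_cast hm.trans hn
      have hA : (0:ℝ) < a + n := by linarith
      calc ‖q (n+1) - l‖ ≤ ((n:ℝ)/(a+n)) * ‖q n - l‖ + (a/(a+n)) * ‖e n - l‖ :=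
            hineq n
        _ ≤ ((n:ℝ)/(a+n)) * (((m:ℝ)/n) * ‖q m - l‖ + δ) + (a/(a+n)) * δ := by
            gcongr <;> first | exact ih | exact hε n hn | positivity
        _ = ((m:ℝ)/(a+n)) * ‖q m - l‖ + δ := by
            field_simp
            ring
        _ ≤ ((m:ℝ)/((n:ℕ)+1:ℝ)) * ‖q m - l‖ + δ := by
            have hstep : (m:ℝ)/(a+n) ≤ (m:ℝ)/((n:ℝ)+1) := by
              rw [div_le_div_iff₀ hA (by linarith)]
              have hm0 : (0:ℝ) ≤ (m:ℝ) := Nat.cast_nonneg m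
              nlinarith
            exact add_le_add_left (mul_le_mul_of_nonneg_right hstep (norm_nonneg _)) δ
        _ = ((m:ℝ)/((n+1:ℕ):ℝ)) * ‖q m - l‖ + δ := by push_cast; ring
  rw [Metric.tendsto_atTop] at hlim ⊢
  intro ε hε
  have hδ : (0:ℝ) < ε/3 := by linarith
  obtain ⟨m0, hm0⟩ := hlim (ε/3) hδ
  set m : ℕ := max m0 1 with hmdef
  have hm1 : 1 ≤ m := le_max_right _ _
  have hεm : ∀ k, m ≤ k → ‖e k - l‖ ≤ ε/3 := by
    intro k hk
    have := hm0 k (le_trans (le_max_left _ _) hk)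
    rw [dist_eq_norm] at this
    exact this.le
  -- choose N so that (m/n) * ‖q m - l‖ < ε/3
  have htend : Filter.Tendsto (fun n : ℕ => ((m:ℝ)/n) * ‖q m - l‖)
      Filter.atTop (nhds 0) := by
    have := tendsto_const_div_atTop_nhds_zero_nat (m:ℝ)
    simpa using this.mul_const ‖q m - l‖
  rw [Metric.tendsto_atTop] at htend
  obtain ⟨N0, hN0⟩ := htend (ε/3) hδ
  refine ⟨max m N0, fun n hn => ?_⟩
  have h1 := key (ε/3) hδ m hm1 hεm n (le_trans (le_max_left _ _) hn)
  have h2 := hN0 n (le_trans (le_max_right _ _) hn)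
  rw [Real.dist_eq, sub_zero] at h2
  have h3 : ((m:ℝ)/n) * ‖q m - l‖ < ε/3 := (le_abs_self _).trans_lt h2
  rw [dist_eq_norm]
  linarith
end

section
/- Let α > 2 and define ω₂(λ) := (1/(α-1))(4(α-1)(λ+1-α) + α(2-α)), ω₁(λ) := 4(λ+1-α), ω₄ := (1/(2(α-1)))(2-α)(3α-2). Define ξ₁(α) := -((α-2)/(8(α-1)))(3α-2 + √((α-2)(5α-2))) and ξ₂(α) := -((α-2)/(8(α-1)))(3α-2 - √((α-2)(5α-2))). Then for every λ with α - 1 + ξ₁(α) < λ < α - 1 + ξ₂(α) one has ω₂(λ)² - (2(5α-2)/(3α-2))·ω₁(λ)·ω₄ < 0. -/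
theorem stmt_11 (α lam : ℝ) (hα : 2 < α)
    (hl : α - 1 + (-((α - 2) / (8 * (α - 1))) * (3 * α - 2 + Real.sqrt ((α - 2) * (5 * α - 2)))) < lam)
    (hu : lam < α - 1 + (-((α - 2) / (8 * (α - 1))) * (3 * α - 2 - Real.sqrt ((α - 2) * (5 * α - 2))))) :
    ((1 / (α - 1)) * (4 * (α - 1) * (lam + 1 - α) + α * (2 - α))) ^ 2
      - (2 * (5 * α - 2) / (3 * α - 2)) * (4 * (lam + 1 - α))
        * ((1 / (2 * (α - 1))) * (2 - α) * (3 * α - 2)) < 0 := by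
  have ha : (0:ℝ) < α - 1 := by linarith
  have hb : (0:ℝ) < 3 * α - 2 := by linarith
  set s := Real.sqrt ((α - 2) * (5 * α - 2)) with hsdef
  have hs : s ^ 2 = (α - 2) * (5 * α - 2) := Real.sq_sqrt (by nlinarith)
  have h1 := (mul_lt_mul_iff_of_pos_right (by linarith : (0:ℝ) < 8 * (α - 1))).mpr hl
  have h2 := (mul_lt_mul_iff_of_pos_right (by linarith : (0:ℝ) < 8 * (α - 1))).mpr hu
  have hc : (α - 2) / (8 * (α - 1)) * (8 * (α - 1)) = α - 2 :=
    div_mul_cancel₀ _ (by positivity)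
  have hcp : (α - 2) / (8 * (α - 1)) * (8 * (α - 1)) * (3 * α - 2 + s) = (α - 2) * (3 * α - 2 + s) := by
    rw [hc]
  have hcm : (α - 2) / (8 * (α - 1)) * (8 * (α - 1)) * (3 * α - 2 - s) = (α - 2) * (3 * α - 2 - s) := by
    rw [hc]
  have hA : 0 < 8 * (α - 1) * (lam + 1 - α) + (α - 2) * (3 * α - 2 + s) := by
    nlinarith [h1, hcp]
  have hB : 8 * (α - 1) * (lam + 1 - α) + (α - 2) * (3 * α - 2 - s) < 0 := by
    nlinarith [h2, hcm]
  have key : (((1 / (α - 1)) * (4 * (α - 1) * (lam + 1 - α) + α * (2 - α))) ^ 2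
      - (2 * (5 * α - 2) / (3 * α - 2)) * (4 * (lam + 1 - α))
        * ((1 / (2 * (α - 1))) * (2 - α) * (3 * α - 2))) * (4 * (α - 1) ^ 2)
      = (8 * (α - 1) * (lam + 1 - α) + (α - 2) * (3 * α - 2 + s))
        * (8 * (α - 1) * (lam + 1 - α) + (α - 2) * (3 * α - 2 - s)) := by
    have h3 : (3 * α - 2) ≠ 0 := ne_of_gt hb
    have h4 : α - 1 ≠ 0 := ne_of_gt ha
    rw [show (((1 / (α - 1)) * (4 * (α - 1) * (lam + 1 - α) + α * (2 - α))) ^ 2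
        - (2 * (5 * α - 2) / (3 * α - 2)) * (4 * (lam + 1 - α))
          * ((1 / (2 * (α - 1))) * (2 - α) * (3 * α - 2))) * (4 * (α - 1) ^ 2)
        = 4 * (4 * (α - 1) * (lam + 1 - α) + α * (2 - α)) ^ 2
          - 16 * (5 * α - 2) * (2 - α) * (lam + 1 - α) * (α - 1) by
        linear_combination (4 * (4 * (α - 1) * (lam + 1 - α) + α * (2 - α)) ^ 2 * ((α - 1) * (α - 1)⁻¹ + 1)) * mul_inv_cancel₀ h4
          - 16 * ((5 * α - 2) * (2 - α) * (lam + 1 - α) * (α - 1)) * ((3 * α - 2) * (3 * α - 2)⁻¹)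
            * mul_inv_cancel₀ (mul_ne_zero two_ne_zero h4)
          - 16 * ((5 * α - 2) * (2 - α) * (lam + 1 - α) * (α - 1)) * mul_inv_cancel₀ h3]
    linear_combination (α - 2) ^ 2 * hs
  nlinarith [key, mul_neg_of_pos_of_neg hA hB, (by positivity : (0:ℝ) < 4 * (α - 1) ^ 2)]
end

section
/- Let H be a real Hilbert space, T : H → H θ-averaged with θ ∈ (0,1], α > 2, 0 < s ≤ 1/θ, x* a fixed point of T, and (x_k)_{k≥0} generated by the Fast KM algorithm. For 0 ≤ λ ≤ (3α)/4 - 1/2, the energy E_{λ,k} := (1/2)‖2λ(x_k - x*) + 2k(x_k - x_{k-1}) + ((3α-2)sk/(2(α-1)))(Id-T)(x_{k-1})‖² + 2λ(α-1-λ)‖x_k - x*‖² + ((α-2)λsk/(α-1))⟨x_k - x*, (Id-T)(x_{k-1})⟩ + ((α-2)(3α-2)s²k²/(8(α-1)²))‖(Id-T)(x_{k-1})‖² is nonnegative for every k ≥ 1. -/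
open RealInnerProductSpace

lemma aux_quad (A K C X Y : ℝ) (hA : 0 ≤ A) (hC : 0 ≤ C) (hd : K ^ 2 ≤ 4 * A * C) :
    0 ≤ A * X ^ 2 - K * X * Y + C * Y ^ 2 := by
  rcases eq_or_lt_of_le hA with hA0 | hA0
  · subst hA0
    have hK : K = 0 := by nlinarith [sq_nonneg K]
    subst hK
    nlinarith [mul_nonneg hC (sq_nonneg Y)]
  · nlinarith [sq_nonneg (2 * A * X - K * Y), mul_nonneg (sub_nonneg.2 hd) (sq_nonneg Y),
      sq_nonneg Y]

set_option maxHeartbeats 1000000 in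
theorem stmt_15 {H : Type*} [NormedAddCommGroup H] [InnerProductSpace ℝ H]
    (T R : H → H) (θ : ℝ) (hθ : θ ∈ Set.Ioc (0 : ℝ) 1)
    (hR : ∀ x y, ‖R x - R y‖ ≤ ‖x - y‖)
    (hT : ∀ x, T x = (1 - θ) • x + θ • R x)
    (α s lam : ℝ) (hα : 2 < α) (hs0 : 0 < s) (hs1 : s ≤ 1 / θ)
    (hlam0 : 0 ≤ lam) (hlam1 : lam ≤ 3 * α / 4 - 1 / 2)
    (xstar : H) (hfix : T xstar = xstar)
    (x : ℕ → H)
    (hrec : ∀ k ≥ 1, x (k + 1) =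
      (1 - s * α / (2 * ((k : ℝ) + α))) • x k
      + ((1 - s) * (k : ℝ) / ((k : ℝ) + α)) • (x k - x (k - 1))
      + (s * α / (2 * ((k : ℝ) + α))) • T (x k)
      + (s * (k : ℝ) / ((k : ℝ) + α)) • (T (x k) - T (x (k - 1)))) :
    ∀ k ≥ 1, 0 ≤
      (1 / 2) * ‖(2 * lam) • (x k - xstar) + (2 * (k : ℝ)) • (x k - x (k - 1))
          + ((3 * α - 2) * s * (k : ℝ) / (2 * (α - 1))) • (x (k - 1) - T (x (k - 1)))‖ ^ 2
      + 2 * lam * (α - 1 - lam) * ‖x k - xstar‖ ^ 2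
      + ((α - 2) * lam * s * (k : ℝ) / (α - 1)) * ⟪x k - xstar, x (k - 1) - T (x (k - 1))⟫
      + ((α - 2) * (3 * α - 2) * s ^ 2 * (k : ℝ) ^ 2 / (8 * (α - 1) ^ 2))
          * ‖x (k - 1) - T (x (k - 1))‖ ^ 2 := by
  intro k hk
  have hk1 : (1 : ℝ) ≤ (k : ℝ) := by exact_mod_cast hk
  have hα1 : (0 : ℝ) < α - 1 := by linarith
  set a := x k - xstar with ha
  set g := x (k - 1) - T (x (k - 1)) with hg
  set A : ℝ := 2 * lam * (α - 1 - lam) with hA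
  set K : ℝ := (α - 2) * lam * s * (k : ℝ) / (α - 1) with hK
  set C : ℝ := (α - 2) * (3 * α - 2) * s ^ 2 * (k : ℝ) ^ 2 / (8 * (α - 1) ^ 2) with hC
  have hAnn : 0 ≤ A := by
    have : lam ≤ α - 1 := by nlinarith
    nlinarith
  have hKnn : 0 ≤ K := by
    apply div_nonneg _ (le_of_lt hα1)
    exact mul_nonneg (mul_nonneg (mul_nonneg (by linarith) hlam0) hs0.le) (by linarith)
  have hCnn : 0 ≤ C := by
    apply div_nonneg _ (by positivity)
    have h1 : (0:ℝ) ≤ α - 2 := by linarith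
    have h2 : (0:ℝ) ≤ 3 * α - 2 := by linarith
    positivity
  have hstep : (α - 2) * lam ≤ (α - 1 - lam) * (3 * α - 2) := by nlinarith
  have hnn2 : (0:ℝ) ≤ (α - 2) * lam := mul_nonneg (by linarith) hlam0
  have key : ((α - 2) * lam) ^ 2 ≤ lam * (α - 1 - lam) * (α - 2) * (3 * α - 2) := by
    nlinarith [mul_le_mul_of_nonneg_left hstep hnn2]
  have e1 : K ^ 2 = ((α - 2) * lam) ^ 2 * (s ^ 2 * (k:ℝ) ^ 2) / (α - 1) ^ 2 := by
    have hne : (α - 1) ≠ 0 := ne_of_gt hα1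
    rw [hK]; field_simp
  have e2 : 4 * A * C = lam * (α - 1 - lam) * (α - 2) * (3 * α - 2) * (s ^ 2 * (k:ℝ) ^ 2)
      / (α - 1) ^ 2 := by
    have hne : (α - 1) ≠ 0 := ne_of_gt hα1
    rw [hA, hC]; field_simp; ring
  have hd : K ^ 2 ≤ 4 * A * C := by
    rw [e1, e2]
    apply div_le_div_of_nonneg_right ?_ (by positivity)
    exact mul_le_mul_of_nonneg_right key (by positivity)
  have hquad := aux_quad A K C ‖a‖ ‖g‖ hAnn hCnn hd
  have hinner : -(‖a‖ * ‖g‖) ≤ ⟪a, g⟫ := by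
    have := abs_real_inner_le_norm a g
    cases abs_le.mp this with
    | intro h1 h2 => linarith
  have hKi : K * (-(‖a‖ * ‖g‖)) ≤ K * ⟪a, g⟫ := mul_le_mul_of_nonneg_left hinner hKnn
  have hnorm : (0:ℝ) ≤ (1 / 2) * ‖(2 * lam) • a + (2 * (k : ℝ)) • (x k - x (k - 1))
      + ((3 * α - 2) * s * (k : ℝ) / (2 * (α - 1))) • g‖ ^ 2 := by positivity
  linarith [hquad, hKi, hnorm]
end
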